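/- Let A and B be real symmetric positive definite matrices and let W(A,B) have all eigenvalues positive for A(t) = t(λ_A I − A) + A and B(t) = t(λ_B I − B) + B at t = 1, where λ_A, λ_B are the largest eigenvalues of A and B. Then A(t) and B(t) are symmetric positive definite for all t in [0,1], and W(A(t),B(t)) has nonzero determinant for all t in [0,1]. -/

import Mathlib

open Matrix

/-- Evaluate a word over `{A,B}` (`false ↦ A`, `true ↦ B`) at two matrices. -/
def wordEval {n : Type*} [Fintype n] [DecidableEq n]
    (w : List Bool) (A B : Matrix n n ℝ) : Matrix n n ℝ :=
  (w.map (fun c => if c then B else A)).prod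

private lemma smul_one_posSemidef {n : Type*} [Fintype n] [DecidableEq n]
    {c : ℝ} (hc : 0 ≤ c) : (c • (1 : Matrix n n ℝ)).PosSemidef := by
  rw [Matrix.smul_one_eq_diagonal]
  exact Matrix.PosSemidef.diagonal fun i => hc

private lemma largest_pos {n : Type*} [Fintype n] [DecidableEq n]
    {A : Matrix n n ℝ} (hA : A.PosDef) {l : ℝ} (hl : l ∈ spectrum ℝ A) : 0 < l := by
  by_contra h
  push_neg at h
  rw [spectrum.mem_iff] at hl
  apply hl
  have h1 : (A + (-l) • (1 : Matrix n n ℝ)).PosDef :=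
    hA.add_posSemidef (smul_one_posSemidef (by linarith))
  have h2 : IsUnit (A + (-l) • (1 : Matrix n n ℝ)) := h1.isUnit
  have : algebraMap ℝ (Matrix n n ℝ) l - A = -(A + (-l) • (1 : Matrix n n ℝ)) := by
    rw [Algebra.algebraMap_eq_smul_one]
    module
  rw [this]
  exact h2.neg

private lemma homotopy_posDef {n : Type*} [Fintype n] [DecidableEq n]
    {A : Matrix n n ℝ} (hA : A.PosDef) {l : ℝ} (hl : 0 < l)
    {t : ℝ} (ht0 : 0 ≤ t) (ht1 : t ≤ 1) :
    (t • (l • (1 : Matrix n n ℝ) - A) + A).PosDef := by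
  have hrw : t • (l • (1 : Matrix n n ℝ) - A) + A
      = (t * l) • (1 : Matrix n n ℝ) + (1 - t) • A := by module
  rw [hrw]
  rcases eq_or_lt_of_le ht1 with h | h
  · subst h
    simp only [sub_self, zero_smul, add_zero]
    rw [Matrix.smul_one_eq_diagonal]
    exact Matrix.PosDef.diagonal fun i => by positivity
  · have hAt : ((1 - t) • A).PosDef := by
      refine ⟨by rw [Matrix.IsHermitian, conjTranspose_smul, star_trivial, hA.1.eq], fun x hx => ?_⟩
      exact (hA.smul (by linarith : (0 : ℝ) < 1 - t)).2 hx
    exact Matrix.PosDef.posSemidef_add (smul_one_posSemidef (by positivity)) hAt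

/-- Along the homotopy `A(t) = t(λ_A I − A) + A`, `B(t) = t(λ_B I − B) + B` (with
`λ_A`, `λ_B` the largest eigenvalues of `A`, `B`), both matrices stay symmetric
positive definite, and the word `W(A(t), B(t))` has nonzero determinant throughout. -/
theorem homotopy_posDef_det_ne_zero {n : Type*} [Fintype n] [DecidableEq n]
    (w : List Bool) (A B : Matrix n n ℝ) (hA : A.PosDef) (hB : B.PosDef)
    (lA lB : ℝ)
    (hlA : lA ∈ spectrum ℝ A ∧ ∀ μ ∈ spectrum ℝ A, μ ≤ lA)
    (hlB : lB ∈ spectrum ℝ B ∧ ∀ μ ∈ spectrum ℝ B, μ ≤ lB)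
    (h1 : ∀ μ ∈ spectrum ℂ
        ((wordEval w ((1 : ℝ) • (lA • (1 : Matrix n n ℝ) - A) + A)
                     ((1 : ℝ) • (lB • (1 : Matrix n n ℝ) - B) + B)).map (algebraMap ℝ ℂ)),
        μ.im = 0 ∧ 0 < μ.re) :
    ∀ t ∈ Set.Icc (0 : ℝ) 1,
      (t • (lA • (1 : Matrix n n ℝ) - A) + A).PosDef ∧
      (t • (lB • (1 : Matrix n n ℝ) - B) + B).PosDef ∧
      (wordEval w (t • (lA • (1 : Matrix n n ℝ) - A) + A)
                  (t • (lB • (1 : Matrix n n ℝ) - B) + B)).det ≠ 0 := by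
  intro t ht
  obtain ⟨ht0, ht1⟩ := ht
  have hAt := homotopy_posDef hA (largest_pos hA hlA.1) ht0 ht1
  have hBt := homotopy_posDef hB (largest_pos hB hlB.1) ht0 ht1
  refine ⟨hAt, hBt, ?_⟩
  rw [wordEval]
  have hdet : ∀ (L : List (Matrix n n ℝ)), L.prod.det = (L.map Matrix.det).prod := by
    intro L
    simpa [Matrix.coe_detMonoidHom] using
      map_list_prod (Matrix.detMonoidHom (n := n) (R := ℝ)) L
  rw [hdet, List.map_map]
  refine List.prod_ne_zero fun h0 => ?_
  simp only [List.mem_map, Function.comp_apply] at h0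
  obtain ⟨c, _, hc⟩ := h0
  rcases c with _ | _ <;> simp only [if_true, if_false, Bool.false_eq_true] at hc
  · exact hAt.det_pos.ne' hc
  · exact hBt.det_pos.ne' hc
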